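/- arXiv:2409.18218 — 3 statements merged into one kernel-verified Lean document; each statement's English description precedes it below -/
import Mathlib

section
/- If the pair (π_T, π_S) is in equilibrium — meaning the student cannot strictly improve its return R_S by deviating (in particular by copying the teacher) — then the teacher's return satisfies R_T ≤ 2β·I(π_TS). -/
/-- if the student cannot strictly improve its return by deviating
(in particular by copying the teacher), then `R_T ≤ 2β·I(π_TS)`. -/
theorem stmt_2 {P : Type*} (joint : P → P → P) (C_N C_S I : P → ℝ) (β : ℝ) (hβ : 0 < β)
    (πT πS : P)
    (hCopy : joint πT πT = πT)
    (hCSle : ∀ π, C_S π ≤ C_N π)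
    (hEquil : ∀ σ : P,
      -C_S (joint πT πS) + β * I (joint πT πS) ≥ -C_S (joint πT σ) + β * I (joint πT σ)) :
    -C_N πT + C_S (joint πT πS) + β * (I πT + I (joint πT πS)) ≤ 2 * β * I (joint πT πS) := by
  have h := hEquil πT
  rw [hCopy] at h
  have h2 := hCSle πT
  nlinarith
end

section
/- Assume there exists a policy π_X with C(π_X, N) = 0, C(π_XS, S) > 0, I(π_X) > I(π_XS) - 1/β, and I(π_XS) > α where α = I(π_TS) + 1/(2β). Then the alternative teacher return R_X = -C(π_X, N) + C(π_XS, S) + β(I(π_X) + I(π_XS)) satisfies R_X > 2β·I(π_XS) - 1 > 2β·I(π_TS) ≥ R_T (the last inequality being the equilibrium lemma). Hence no such π_X can exist at equilibrium, i.e., the student is α-β-optimal. -/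
/-- the chain of inequalities `R_X > 2β·I(π_XS) - 1 > 2β·I(π_TS) ≥ R_T`
showing no such `π_X` can exist at equilibrium. -/
theorem stmt_3 (cXN cXS iX iXS iTS RT β : ℝ) (hβ : 0 < β)
    (hcXN : cXN = 0) (hcXS : cXS > 0)
    (hiX : iX > iXS - 1 / β)
    (hiXS : iXS > iTS + 1 / (2 * β))
    (hRT : RT ≤ 2 * β * iTS) :
    (-cXN + cXS + β * (iX + iXS) > 2 * β * iXS - 1) ∧
      (2 * β * iXS - 1 > 2 * β * iTS) ∧ (2 * β * iTS ≥ RT) := by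
  have h1 : β * (1 / β) = 1 := by field_simp
  have h2 : (2 * β) * (1 / (2 * β)) = 1 := by field_simp
  refine ⟨?_, ?_, hRT⟩ <;> nlinarith [mul_lt_mul_of_pos_left hiX hβ,
    mul_lt_mul_of_pos_left hiXS (by linarith : (0:ℝ) < 2 * β)]
end

section
/- Abstract equilibrium theorem: Let Π be a set (of policies) with a pairing operation (·,·) : Π × Π → Π producing joint policies, and functions C_N, C_S : Π → ℝ with 0 ≤ C_S(π) ≤ C_N(π) for all π ∈ Π, and I : Π → ℝ, and let β > 0. Define R_T(τ, σ) = -C_N(τ) + C_S((τ,σ)) + β(I(τ) + I((τ,σ))) and R_S(τ, σ) = -C_S((τ,σ)) + β·I((τ,σ)). Assume (τ,τ) behaves so that C_S((τ,τ)) ≤ C_N(τ) and I((τ,τ)) = I(τ). If (π_T, π_S) is an equilibrium (neither player can strictly improve its own return by unilateral deviation), then π_S is α-β-optimal with α = I((π_T,π_S)) + 1/(2β): for every τ ∈ Π with I((τ, π_S)) > α and C_N(τ) = 0, it holds that C_S((τ,π_S)) > 0 implies I(τ) < I((τ,π_S)) - 1/β. -/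
/-- abstract equilibrium theorem — at equilibrium the student is
`α`-`β`-optimal with `α = I((π_T, π_S)) + 1/(2β)`. -/
theorem stmt_6 {P : Type*} (joint : P → P → P) (C_N C_S : P → ℝ) (I : P → ℝ)
    (β : ℝ) (hβ : 0 < β)
    (hC : ∀ π, 0 ≤ C_S π ∧ C_S π ≤ C_N π)
    (hSelfC : ∀ τ, C_S (joint τ τ) ≤ C_N τ)
    (hSelfI : ∀ τ, I (joint τ τ) = I τ)
    (πT πS : P)
    (hEqT : ∀ τ : P,
      -C_N πT + C_S (joint πT πS) + β * (I πT + I (joint πT πS)) ≥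
        -C_N τ + C_S (joint τ πS) + β * (I τ + I (joint τ πS)))
    (hEqS : ∀ σ : P,
      -C_S (joint πT πS) + β * I (joint πT πS) ≥
        -C_S (joint πT σ) + β * I (joint πT σ)) :
    ∀ τ : P, I (joint τ πS) > I (joint πT πS) + 1 / (2 * β) → C_N τ = 0 →
      C_S (joint τ πS) > 0 → I τ < I (joint τ πS) - 1 / β := by
  intro τ hI hCN hCS
  have h1 := hEqT τ
  have h2 := hEqS πT
  have h3 := hSelfC πT
  have h4 := hSelfI πT
  rw [h4] at h2
  have key : 2 * β * I (joint πT πS) ≥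
      C_S (joint τ πS) + β * I τ + β * I (joint τ πS) := by
    have := (hC (joint πT πT)).1
    nlinarith [h1, h2, h3]
  have hβ' : (0:ℝ) < 2 * β := by linarith
  rw [gt_iff_lt, ← sub_pos] at hI
  have h5 : 2 * β * (I (joint τ πS) - I (joint πT πS) - 1 / (2 * β)) > 0 := by
    have : I (joint τ πS) - I (joint πT πS) - 1 / (2*β) > 0 := by linarith
    positivity
  have h6 : 2 * β * (1 / (2 * β)) = 1 := by field_simp
  have h7 : β * (1 / β) = 1 := by field_simp
  nlinarith [h5, h6, h7, key, hCS]
end
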